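/- Mass conservation law for the prion system. Fix t ≥ 0 and suppose: V is differentiable at t with V'(t) = λ − γV(t) − V(t)∫₀^∞ τ(x)u(x,t)dx; u(·,t) ≥ 0 satisfies the polymer equation pointwise on (0,∞), namely ∂ₜu(x,t) = −V(t)·∂ₓ(τ(x)u(x,t)) − (μ(x)+β(x))u(x,t) + 2∫ₓ^∞ β(y)κ(x,y)u(y,t)dy; the functions x↦x·u(x,t), x↦x·μ(x)u(x,t), x↦x·β(x)u(x,t), x↦τ(x)u(x,t) and x↦x·∂ₓ(τu)(x,t) are integrable on (0,∞); x·τ(x)u(x,t) → 0 as x→0⁺ and as x→∞; (x,y) ↦ x·β(y)κ(x,y)u(y,t) is integrable on the region {0 < x < y}; and s ↦ P(s) := ∫₀^∞ x u(x,s)dx is differentiable at t with derivative ∫₀^∞ x·∂ₜu(x,t)dx. Then d/dt (V(t) + P(t)) = λ − γV(t) − ∫₀^∞ μ(x)·x·u(x,t)dx. -/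

import Mathlib

open MeasureTheory Set Filter Topology

lemma ftc_Ioi_zero (g g' : ℝ → ℝ)
    (hderiv : ∀ x > 0, HasDerivAt g (g' x) x)
    (hint : IntegrableOn g' (Ioi (0:ℝ)))
    (h0 : Tendsto g (nhdsWithin 0 (Ioi 0)) (nhds 0))
    (htop : Tendsto g atTop (nhds 0)) :
    ∫ x in Ioi (0:ℝ), g' x = 0 := by
  have hII : ∀ a b : ℝ, 0 < a → a ≤ b → IntervalIntegrable g' volume a b := by
    intro a b ha hab
    rw [intervalIntegrable_iff_integrableOn_Ioc_of_le hab]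
    exact hint.mono_set (fun x hx => lt_of_lt_of_le ha hx.1.le)
  have hIoi1 : ∫ x in Ioi (1:ℝ), g' x = 0 - g 1 := by
    refine integral_Ioi_of_hasDerivAt_of_tendsto
      ((hderiv 1 one_pos).continuousAt.continuousWithinAt)
      (fun x hx => hderiv x (lt_trans one_pos (mem_Ioi.mp hx)))
      (hint.mono_set (fun x hx => mem_Ioi.mpr (lt_trans one_pos (mem_Ioi.mp hx)))) htop
  have hftc : ∀ a ∈ Ioo (0:ℝ) 1, ∫ x in a..1, g' x = g 1 - g a := by
    intro a ha
    refine intervalIntegral.integral_eq_sub_of_hasDerivAt (fun x hx => ?_) (hII a 1 ha.1 ha.2.le)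
    rw [uIcc_of_le ha.2.le] at hx
    exact hderiv x (lt_of_lt_of_le ha.1 hx.1)
  set F : ℝ → ℝ := fun a => ∫ x in (0:ℝ)..a, g' x with hF
  have hintIcc : IntegrableOn g' (uIcc (0:ℝ) 1) := by
    rw [uIcc_of_le zero_le_one, integrableOn_Icc_iff_integrableOn_Ioc]
    exact hint.mono_set Ioc_subset_Ioi_self
  have hFcont : ContinuousOn F (uIcc (0:ℝ) 1) :=
    intervalIntegral.continuousOn_primitive_interval hintIcc
  have hadd : ∀ a ∈ Ioo (0:ℝ) 1, F a + ∫ x in a..1, g' x = F 1 := by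
    intro a ha
    refine intervalIntegral.integral_add_adjacent_intervals ?_ (hII a 1 ha.1 ha.2.le)
    rw [intervalIntegrable_iff_integrableOn_Ioc_of_le ha.1.le]
    exact hintIcc.mono_set (fun x hx => by
      rw [uIcc_of_le zero_le_one]; exact ⟨hx.1.le, hx.2.trans ha.2.le⟩)
  have hkey : ∀ a ∈ Ioo (0:ℝ) 1, F a = F 1 - g 1 + g a := by
    intro a ha
    have h := hadd a ha
    rw [hftc a ha] at h
    linarith
  haveI : (nhdsWithin (0:ℝ) (Ioo 0 1)).NeBot := left_nhdsWithin_Ioo_neBot one_pos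
  have hle : nhdsWithin (0:ℝ) (Ioo 0 1) ≤ nhdsWithin 0 (uIcc (0:ℝ) 1) := by
    rw [uIcc_of_le zero_le_one]
    exact nhdsWithin_mono _ (fun x hx => ⟨hx.1.le, hx.2.le⟩)
  have hle' : nhdsWithin (0:ℝ) (Ioo 0 1) ≤ nhdsWithin 0 (Ioi 0) :=
    nhdsWithin_mono _ (fun x hx => hx.1)
  have hlim1 : Tendsto F (nhdsWithin 0 (Ioo 0 1)) (nhds (F 0)) :=
    ((hFcont 0 (by rw [uIcc_of_le zero_le_one]; exact ⟨le_rfl, zero_le_one⟩)).tendsto).mono_left hle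
  have hlim2 : Tendsto F (nhdsWithin 0 (Ioo 0 1)) (nhds (F 1 - g 1 + 0)) := by
    refine Tendsto.congr' ?_ ((tendsto_const_nhds.sub tendsto_const_nhds).add (h0.mono_left hle'))
    filter_upwards [self_mem_nhdsWithin] with a ha
    exact (hkey a ha).symm
  have hF0 : F 0 = 0 := intervalIntegral.integral_same
  have hF1 : F 1 = g 1 := by
    have h := tendsto_nhds_unique hlim1 hlim2
    rw [hF0] at h; linarith
  have hsplit : ∫ x in Ioi (0:ℝ), g' x = (∫ x in Ioc (0:ℝ) 1, g' x) + ∫ x in Ioi (1:ℝ), g' x := by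
    rw [← setIntegral_union (Ioc_disjoint_Ioi le_rfl) measurableSet_Ioi
      (hint.mono_set Ioc_subset_Ioi_self) (hint.mono_set (fun x hx => mem_Ioi.mpr (lt_trans one_pos (mem_Ioi.mp hx)))),
      Ioc_union_Ioi_eq_Ioi zero_le_one]
  have hC : (∫ x in Ioc (0:ℝ) 1, g' x) = F 1 := (intervalIntegral.integral_of_le zero_le_one).symm
  rw [hsplit, hC, hF1, hIoi1]; ring


/-- **Mass conservation law for the prion system** (equation (5) of the paper, with `x₀ = 0`):
if `V` solves the monomer equation at time `t` and `u(·,t)` solves the polymer equation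
pointwise on `(0,∞)`, with suitable integrability, decay, and differentiation-under-the-
integral hypotheses, then `d/dt (V(t) + P(t)) = λ − γ V(t) − ∫ μ(x) x u(x,t) dx`, where
`P(t) = ∫ x u(x,t) dx`. -/
theorem mass_conservation
    (lam gam : ℝ) (hlam : 0 < lam) (hgam : 0 < gam)
    (tau mu beta : ℝ → ℝ) (kappa : ℝ → ℝ → ℝ)
    (htau_nn : ∀ x > 0, 0 ≤ tau x) (hmu_nn : ∀ x > 0, 0 ≤ mu x)
    (hbeta_nn : ∀ x > 0, 0 ≤ beta x)
    (hkap_nn : ∀ x y : ℝ, 0 ≤ kappa x y)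
    (hkap_supp : ∀ x y : ℝ, y ≤ x → kappa x y = 0)
    (hkap_mass : ∀ y > 0, ∫ x in (0:ℝ)..y, kappa x y = 1)
    (hkap_mom : ∀ y > 0, ∫ x in (0:ℝ)..y, x * kappa x y = y / 2)
    (V : ℝ → ℝ) (u : ℝ → ℝ → ℝ) (t : ℝ) (ht : 0 ≤ t)
    (ut Dx : ℝ → ℝ)
    -- nonnegativity of the polymer density at time t
    (hu_nn : ∀ x > 0, 0 ≤ u x t)
    -- the monomer equation: V is differentiable at t with the prescribed derivative
    (hV : HasDerivAt V (lam - gam * V t - V t * ∫ x in Ioi (0:ℝ), tau x * u x t) t)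
    -- Dx x is the spatial derivative of τ u(·,t) at x, ut x the time derivative of u(x,·) at t
    (hDx : ∀ x > 0, HasDerivAt (fun y => tau y * u y t) (Dx x) x)
    (hut : ∀ x > 0, HasDerivAt (fun s => u x s) (ut x) t)
    -- the polymer equation holds pointwise on (0,∞)
    (hpde : ∀ x > 0, ut x = -V t * Dx x - (mu x + beta x) * u x t
        + 2 * ∫ y in Ioi x, beta y * kappa x y * u y t)
    -- integrability hypotheses
    (hint_xu : IntegrableOn (fun x => x * u x t) (Ioi 0))
    (hint_xmu : IntegrableOn (fun x => x * mu x * u x t) (Ioi 0))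
    (hint_xbeta : IntegrableOn (fun x => x * beta x * u x t) (Ioi 0))
    (hint_tau : IntegrableOn (fun x => tau x * u x t) (Ioi 0))
    (hint_xDx : IntegrableOn (fun x => x * Dx x) (Ioi 0))
    -- decay of x τ(x) u(x,t) at 0⁺ and at ∞
    (hlim0 : Tendsto (fun x => x * (tau x * u x t)) (nhdsWithin 0 (Ioi 0)) (nhds 0))
    (hlimtop : Tendsto (fun x => x * (tau x * u x t)) atTop (nhds 0))
    -- integrability of the fragmentation kernel term on the region {0 < x < y}
    (hint_frag : IntegrableOn
        (fun p : ℝ × ℝ => p.1 * (beta p.2 * kappa p.1 p.2 * u p.2 t))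
        {p : ℝ × ℝ | 0 < p.1 ∧ p.1 < p.2})
    -- P(s) = ∫ x u(x,s) dx is differentiable at t with derivative ∫ x ∂ₜu(x,t) dx
    (hP : HasDerivAt (fun s => ∫ x in Ioi (0:ℝ), x * u x s)
        (∫ x in Ioi (0:ℝ), x * ut x) t) :
    HasDerivAt (fun s => V s + ∫ x in Ioi (0:ℝ), x * u x s)
      (lam - gam * V t - ∫ x in Ioi (0:ℝ), mu x * x * u x t) t := by
  set Iτ := ∫ x in Ioi (0:ℝ), tau x * u x t with hIτ
  -- Step A : ∫ x Dx = -Iτ  (integration by parts)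
  have hgderiv : ∀ x > 0, HasDerivAt (fun y => y * (tau y * u y t))
      (tau x * u x t + x * Dx x) x := by
    intro x hx
    have h := (hasDerivAt_id x).mul (hDx x hx)
    convert h using 1 <;> first | rfl | simp
  have hstepA : ∫ x in Ioi (0:ℝ), x * Dx x = -Iτ := by
    have h0 : ∫ x in Ioi (0:ℝ), (tau x * u x t + x * Dx x) = 0 :=
      ftc_Ioi_zero _ _ hgderiv (hint_tau.add hint_xDx) hlim0 hlimtop
    rw [integral_add hint_tau hint_xDx] at h0
    rw [hIτ]; linarith
  -- Fubini setup
  set f : ℝ × ℝ → ℝ := fun p => p.1 * (beta p.2 * kappa p.1 p.2 * u p.2 t) with hf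
  have hfzero : ∀ p : ℝ × ℝ, p.2 ≤ p.1 → f p = 0 := by
    intro p hp
    simp [hf, hkap_supp p.1 p.2 hp]
  have hSmeas : MeasurableSet {p : ℝ × ℝ | 0 < p.1 ∧ p.1 < p.2} :=
    (measurableSet_lt measurable_const measurable_fst).inter
      (measurableSet_lt measurable_fst measurable_snd)
  have hfprod : IntegrableOn f ((Ioi (0:ℝ)) ×ˢ (Ioi (0:ℝ))) := by
    have h2 : IntegrableOn f
        ((Ioi (0:ℝ)) ×ˢ (Ioi (0:ℝ)) \ {p : ℝ × ℝ | 0 < p.1 ∧ p.1 < p.2}) := by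
      refine (integrableOn_congr_fun (g := fun _ : ℝ × ℝ => (0:ℝ)) ?_
        ((measurableSet_Ioi.prod measurableSet_Ioi).diff hSmeas)).mpr
        integrableOn_zero
      intro p hp
      apply hfzero
      by_contra h
      push_neg at h
      exact hp.2 ⟨hp.1.1, h⟩
    refine (hint_frag.union h2).mono_set (fun p hp => ?_)
    by_cases h : p ∈ {p : ℝ × ℝ | 0 < p.1 ∧ p.1 < p.2}
    · exact Or.inl h
    · exact Or.inr ⟨hp, h⟩
  have hfint : Integrable f
      ((volume.restrict (Ioi (0:ℝ))).prod (volume.restrict (Ioi (0:ℝ)))) := by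
    rw [Measure.prod_restrict, ← Measure.volume_eq_prod]
    exact hfprod
  -- marginals
  have hmarg : ∀ x ∈ Ioi (0:ℝ),
      (∫ y in Ioi (0:ℝ), f (x, y)) = x * ∫ y in Ioi x, beta y * kappa x y * u y t := by
    intro x hx
    have h1 : ∀ y ∈ Ioi (0:ℝ), f (x, y) = (Ioi x).indicator (fun y => f (x, y)) y := by
      intro y _
      by_cases h : x < y
      · exact (indicator_of_mem (show y ∈ Ioi x from h) (fun y => f (x, y))).symm
      · rw [hfzero (x, y) (not_lt.mp h)]
        exact (indicator_of_notMem (show y ∉ Ioi x from h) (fun y => f (x, y))).symm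
    have hI : Ioi x ∩ Ioi (0:ℝ) = Ioi x := by
      rw [Ioi_inter_Ioi, sup_eq_left.mpr (le_of_lt hx)]
    rw [setIntegral_congr_fun measurableSet_Ioi h1, integral_indicator measurableSet_Ioi,
        Measure.restrict_restrict measurableSet_Ioi, hI]
    simp only [hf]
    exact integral_const_mul x _
  have hmarg2 : ∀ y ∈ Ioi (0:ℝ),
      (∫ x in Ioi (0:ℝ), f (x, y)) = y / 2 * (beta y * u y t) := by
    intro y hy
    have h1 : ∀ x ∈ Ioi (0:ℝ), f (x, y) = (Iio y).indicator (fun x => f (x, y)) x := by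
      intro x _
      by_cases h : x < y
      · exact (indicator_of_mem (show x ∈ Iio y from h) (fun x => f (x, y))).symm
      · rw [hfzero (x, y) (not_lt.mp h)]
        exact (indicator_of_notMem (show x ∉ Iio y from h) (fun x => f (x, y))).symm
    rw [setIntegral_congr_fun measurableSet_Ioi h1, integral_indicator measurableSet_Iio,
        Measure.restrict_restrict measurableSet_Iio, Iio_inter_Ioi]
    have h2 : ∀ x ∈ Ioo (0:ℝ) y, f (x, y) = (beta y * u y t) * (x * kappa x y) := by
      intro x _
      simp only [hf]; ring
    rw [setIntegral_congr_fun measurableSet_Ioo h2, integral_const_mul]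
    have h3 : ∫ x in Ioo (0:ℝ) y, x * kappa x y = y / 2 := by
      rw [← integral_Ioc_eq_integral_Ioo, ← intervalIntegral.integral_of_le (le_of_lt hy)]
      exact hkap_mom y hy
    rw [h3]; ring
  have hswap : (∫ x in Ioi (0:ℝ), ∫ y in Ioi (0:ℝ), f (x, y))
      = ∫ y in Ioi (0:ℝ), ∫ x in Ioi (0:ℝ), f (x, y) := by
    have h := integral_integral_swap (f := fun x y => f (x, y))
      (μ := volume.restrict (Ioi (0:ℝ))) (ν := volume.restrict (Ioi (0:ℝ)))
      (by exact hfint)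
    simpa using h
  have hMint : IntegrableOn (fun x => ∫ y in Ioi (0:ℝ), f (x, y)) (Ioi 0) :=
    hfint.integral_prod_left
  -- Step C
  have hstepC : ∫ x in Ioi (0:ℝ), x * ut x
      = V t * Iτ - ∫ x in Ioi (0:ℝ), x * mu x * u x t := by
    have hexp : ∀ x ∈ Ioi (0:ℝ), x * ut x
        = (-V t) * (x * Dx x) - x * mu x * u x t - x * beta x * u x t
          + 2 * ∫ y in Ioi (0:ℝ), f (x, y) := by
      intro x hx
      rw [hmarg x hx, hpde x hx]; ring
    have i1 : IntegrableOn (fun x => (-V t) * (x * Dx x)) (Ioi 0) := hint_xDx.const_mul _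
    have i4 : IntegrableOn (fun x => 2 * ∫ y in Ioi (0:ℝ), f (x, y)) (Ioi 0) :=
      hMint.const_mul _
    have i2 : IntegrableOn (fun x => (-V t) * (x * Dx x) - x * mu x * u x t) (Ioi 0) :=
      i1.sub hint_xmu
    have i3 : IntegrableOn
        (fun x => (-V t) * (x * Dx x) - x * mu x * u x t - x * beta x * u x t) (Ioi 0) :=
      i2.sub hint_xbeta
    rw [setIntegral_congr_fun measurableSet_Ioi hexp,
        integral_add i3 i4, integral_sub i2 hint_xbeta, integral_sub i1 hint_xmu,
        integral_const_mul, integral_const_mul, hstepA, hswap]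
    have h5 : (∫ y in Ioi (0:ℝ), ∫ x in Ioi (0:ℝ), f (x, y))
        = ∫ x in Ioi (0:ℝ), (1/2) * (x * beta x * u x t) := by
      rw [setIntegral_congr_fun measurableSet_Ioi hmarg2]
      refine setIntegral_congr_fun measurableSet_Ioi (fun y _ => ?_)
      ring
    rw [h5, integral_const_mul]
    ring
  -- assemble
  have hfinal := hV.add hP
  have heq : (lam - gam * V t - V t * Iτ) + ∫ x in Ioi (0:ℝ), x * ut x
      = lam - gam * V t - ∫ x in Ioi (0:ℝ), mu x * x * u x t := by
    rw [hstepC]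
    have h := setIntegral_congr_fun (μ := volume) (s := Ioi (0:ℝ)) (f := fun x => mu x * x * u x t)
      (g := fun x => x * mu x * u x t) measurableSet_Ioi
      (fun x _ => by ring)
    rw [h]; ring
  rw [← heq]
  exact hfinal
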